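/- Convexity of the set of (operation, HTO) pairs via a controller system: fix finite nonempty types A and B, a Hermitian H_B : Matrix B B ℂ, and b > 0, with Gibbs state ρ_B. Let n ≥ 1, and for each i : Fin n let U_i : Matrix (A × B) (A × B) ℂ satisfy U_iᴴ * U_i = 1, with heat transfer operator Q_i. Let λ : Fin n → ℝ with λ i > 0 for all i and ∑ i, λ i = 1, set C = Fin n, H_C = Matrix.diagonal (fun i => (-b⁻¹ * Real.log (λ i) : ℂ)), and H_BC = H_B ⊗ₖ 1 + 1 ⊗ₖ H_C on B × C. Then: (a) the Gibbs state of H_BC at inverse temperature b equals ρ_B ⊗ₖ Matrix.diagonal (fun i => (λ i : ℂ)); (b) the matrix V on A × (B × C) obtained from ∑ i, U_i ⊗ₖ Matrix.stdBasisMatrix i i 1 via the natural reindexing (A × B) × C ≃ A × (B × C) satisfies Vᴴ * V = 1; (c) for every density matrix ρ on A, tr_{B×C} (V * (ρ ⊗ₖ (ρ_B ⊗ₖ Matrix.diagonal (fun i => (λ i : ℂ)))) * Vᴴ) = ∑ i, (λ i : ℂ) • tr_B (U_i * (ρ ⊗ₖ ρ_B) * U_iᴴ); and (d) the heat transfer operator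 of the realization setup (A, B × C, H_BC, b, V) equals ∑ i, (λ i : ℂ) • Q_i. -/

import Mathlib

open Matrix Kronecker
open scoped ComplexOrder

noncomputable section

/-- A density matrix: positive semidefinite with trace 1. -/
def IsDensityMatrix {ι : Type*} [Fintype ι] (ρ : Matrix ι ι ℂ) : Prop :=
  ρ.PosSemidef ∧ ρ.trace = 1

/-- The matrix exponential. -/
noncomputable def mexp {ι : Type*} [Fintype ι] [DecidableEq ι] (M : Matrix ι ι ℂ) :
    Matrix ι ι ℂ :=
  NormedSpace.exp M

/-- Von Neumann entropy of a (Hermitian) matrix, via its eigenvalues. -/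
noncomputable def vnEntropy {ι : Type*} [Fintype ι] [DecidableEq ι] (ρ : Matrix ι ι ℂ) : ℝ :=
  if h : ρ.IsHermitian then -∑ i, h.eigenvalues i * Real.log (h.eigenvalues i) else 0

/-- The Gibbs state of the Hamiltonian `H` at inverse temperature `b`. -/
noncomputable def gibbs {ι : Type*} [Fintype ι] [DecidableEq ι] (H : Matrix ι ι ℂ) (b : ℝ) :
    Matrix ι ι ℂ :=
  (Matrix.trace (mexp (-b • H)))⁻¹ • mexp (-b • H)

/-- Equilibrium energy of the bath. -/
noncomputable def eqEnergy {ι : Type*} [Fintype ι] [DecidableEq ι] (H : Matrix ι ι ℂ) (b : ℝ) : ℝ :=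
  (Matrix.trace (gibbs H b * H)).re

/-- Partial trace over the second (bath) factor. -/
def ptraceB {A B : Type*} [Fintype B] (M : Matrix (A × B) (A × B) ℂ) : Matrix A A ℂ :=
  Matrix.of fun a a' => ∑ k : B, M (a, k) (a', k)

/-- Partial trace over the first (device) factor. -/
def ptraceA {A B : Type*} [Fintype A] (M : Matrix (A × B) (A × B) ℂ) : Matrix B B ℂ :=
  Matrix.of fun k k' => ∑ a : A, M (a, k) (a, k')

/-- The heat transfer operator of a realization setup. -/
noncomputable def hto {A B : Type*} [Fintype A] [DecidableEq A] [Fintype B] [DecidableEq B]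
    (H_B : Matrix B B ℂ) (b : ℝ) (U : Matrix (A × B) (A × B) ℂ) : Matrix A A ℂ :=
  ptraceB (((1 : Matrix A A ℂ) ⊗ₖ gibbs H_B b) * Uᴴ * ((1 : Matrix A A ℂ) ⊗ₖ H_B) * U)
    - eqEnergy H_B b • (1 : Matrix A A ℂ)

/-- Matrix logarithm of a Hermitian matrix through the continuous functional calculus. -/
noncomputable def mlog {ι : Type*} [Fintype ι] [DecidableEq ι] (ρ : Matrix ι ι ℂ) :
    Matrix ι ι ℂ :=
  if h : ρ.IsHermitian then h.cfc Real.log else 0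

/-- Quantum relative entropy `S(σ‖ρ)`. -/
noncomputable def relEntropy {ι : Type*} [Fintype ι] [DecidableEq ι] (σ ρ : Matrix ι ι ℂ) : ℝ :=
  (Matrix.trace (σ * (mlog σ - mlog ρ))).re

end


noncomputable section Helpers
open NormedSpace
set_option linter.unusedSectionVars false

variable {A B C : Type*} [Fintype A] [DecidableEq A] [Fintype B] [DecidableEq B]
  [Fintype C] [DecidableEq C]

lemma conjTranspose_kron (M : Matrix A A ℂ) (N : Matrix C C ℂ) :
    (M ⊗ₖ N)ᴴ = Mᴴ ⊗ₖ Nᴴ := by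
  ext ⟨a, c⟩ ⟨b, d⟩
  simp [conjTranspose_apply, kroneckerMap_apply, mul_comm]

lemma stdBasis_conjTranspose (i : C) :
    (single i i (1 : ℂ))ᴴ = single i i 1 := by
  ext a b
  simp [conjTranspose_apply, single, Matrix.of_apply, apply_ite (star : ℂ → ℂ),
    and_comm]

lemma stdBasis_mul_diagonal (i : C) (d : C → ℂ) :
    single i i (1 : ℂ) * diagonal d = d i • single i i 1 := by
  ext a b
  simp only [mul_diagonal, Matrix.smul_apply, smul_eq_mul, single, of_apply]
  split_ifs with h
  · rw [← h.2]; ring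
  · ring

lemma diagonal_mul_stdBasis (i : C) (d : C → ℂ) :
    diagonal d * single i i (1 : ℂ) = d i • single i i 1 := by
  ext a b
  simp only [diagonal_mul, Matrix.smul_apply, smul_eq_mul, single, of_apply]
  split_ifs with h
  · rw [← h.1]
  · ring

lemma trace_stdBasis (i : C) : (single i i (1 : ℂ)).trace = 1 := by
  simp [Matrix.trace, Matrix.diag, single, Finset.sum_ite_eq, Matrix.of_apply]

lemma sum_stdBasis : ∑ i : C, single i i (1 : ℂ) = 1 := by
  ext a b
  simp only [Matrix.sum_apply, single, of_apply, one_apply]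
  by_cases h : a = b
  · subst h; simp
  · rw [if_neg h]
    refine Finset.sum_eq_zero fun x _ => ?_
    rw [if_neg]; rintro ⟨rfl, rfl⟩; exact h rfl

lemma kron_sum {ι : Type*} (s : Finset ι) (M : Matrix A A ℂ) (f : ι → Matrix C C ℂ) :
    M ⊗ₖ (∑ i ∈ s, f i) = ∑ i ∈ s, M ⊗ₖ f i := by
  ext ⟨a, c⟩ ⟨b, d⟩
  simp [kroneckerMap_apply, Matrix.sum_apply, Finset.mul_sum]

lemma ptraceB_smul (c : ℂ) (M : Matrix (A × B) (A × B) ℂ) :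
    ptraceB (c • M) = c • ptraceB M := by
  ext a a'; simp [ptraceB, Finset.mul_sum]

lemma ptraceB_add (M N : Matrix (A × B) (A × B) ℂ) :
    ptraceB (M + N) = ptraceB M + ptraceB N := by
  ext a a'; simp [ptraceB, Finset.sum_add_distrib]

lemma ptraceB_sum {n : Type*} (s : Finset n) (f : n → Matrix (A × B) (A × B) ℂ) :
    ptraceB (∑ i ∈ s, f i) = ∑ i ∈ s, ptraceB (f i) := by
  ext a a'
  simp only [ptraceB, Matrix.sum_apply, of_apply]
  rw [Finset.sum_comm]

lemma ptraceB_kron (M : Matrix A A ℂ) (N : Matrix B B ℂ) :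
    ptraceB (M ⊗ₖ N) = N.trace • M := by
  ext a a'
  simp only [ptraceB, kroneckerMap_apply, Matrix.trace, Matrix.diag, Matrix.smul_apply, smul_eq_mul,
    of_apply]
  rw [Finset.sum_mul]
  exact Finset.sum_congr rfl fun k _ => mul_comm _ _

lemma ptraceB_reindex_assoc (M : Matrix ((A × B) × C) ((A × B) × C) ℂ) :
    ptraceB (reindex (Equiv.prodAssoc A B C) (Equiv.prodAssoc A B C) M) =
      ptraceB (ptraceB M) := by
  ext a a'
  simp [ptraceB, reindex_apply, submatrix_apply, Equiv.prodAssoc, Fintype.sum_prod_type]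

lemma real_smul_matrix (r : ℝ) {ι : Type*} (M : Matrix ι ι ℂ) :
    r • M = (r : ℂ) • M := by
  ext i j; simp [Complex.real_smul]

lemma reindex_conjT {m p : Type*} (e : m ≃ p) (M : Matrix m m ℂ) :
    (reindex e e M)ᴴ = reindex e e Mᴴ := by
  ext i j; simp [reindex_apply, conjTranspose_apply, submatrix_apply]

lemma reindex_mul {m p : Type*} [Fintype m] [Fintype p] (e : m ≃ p) (M N : Matrix m m ℂ) :
    reindex e e M * reindex e e N = reindex e e (M * N) := by
  simp [reindex_apply, submatrix_mul_equiv]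

lemma reindex_add {m p : Type*} (e : m ≃ p) (M N : Matrix m m ℂ) :
    reindex e e (M + N) = reindex e e M + reindex e e N := by
  ext i j; simp [reindex_apply, submatrix_apply]

lemma reindex_one {m p : Type*} [DecidableEq m] [DecidableEq p] (e : m ≃ p) :
    reindex e e (1 : Matrix m m ℂ) = 1 := by
  simp [reindex_apply, submatrix_one_equiv]

/-- Sandwich lemma. -/
lemma sandwich {X : Type*} [Fintype X] [DecidableEq X] {n : ℕ}
    (P R : Fin n → Matrix X X ℂ) (M : Matrix X X ℂ) (d : Fin n → ℂ) :
    (∑ i, P i ⊗ₖ single i i (1 : ℂ)) * (M ⊗ₖ diagonal d) *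
        (∑ j, R j ⊗ₖ single j j (1 : ℂ)) =
      ∑ i, d i • ((P i * M * R i) ⊗ₖ single i i 1) := by
  rw [Finset.sum_mul, Finset.sum_mul]
  refine Finset.sum_congr rfl fun i _ => ?_
  rw [Finset.mul_sum]
  rw [Finset.sum_eq_single i]
  · rw [← mul_kronecker_mul, stdBasis_mul_diagonal, kronecker_smul,
      smul_mul_assoc, ← mul_kronecker_mul, single_mul_single_same, mul_one]
  · intro j _ hji
    rw [← mul_kronecker_mul, stdBasis_mul_diagonal, kronecker_smul,
      smul_mul_assoc, ← mul_kronecker_mul, single_mul_single_of_ne (h := Ne.symm hji)]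
    simp
  · intro h; exact absurd (Finset.mem_univ i) h

lemma kron_one_eq_blockDiagonal (M : Matrix B B ℂ) :
    M ⊗ₖ (1 : Matrix C C ℂ) = blockDiagonal fun _ : C => M := by
  ext ⟨b, c⟩ ⟨b', c'⟩
  simp [blockDiagonal_apply, one_apply, mul_ite]

lemma mexp_kron_one (M : Matrix B B ℂ) :
    mexp (M ⊗ₖ (1 : Matrix C C ℂ)) = mexp M ⊗ₖ 1 := by
  letI : SeminormedRing (Matrix B B ℂ) := Matrix.linftyOpSemiNormedRing
  letI : NormedRing (Matrix B B ℂ) := Matrix.linftyOpNormedRing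
  letI : NormedAlgebra ℂ (Matrix B B ℂ) := Matrix.linftyOpNormedAlgebra
  rw [kron_one_eq_blockDiagonal, kron_one_eq_blockDiagonal, mexp, Matrix.exp_blockDiagonal]
  congr 1
  letI : NormedAlgebra ℚ (Matrix B B ℂ) := Matrix.linftyOpNormedAlgebra
  funext x
  exact Pi.coe_exp _ x

lemma one_kron_diagonal (v : C → ℂ) :
    (1 : Matrix B B ℂ) ⊗ₖ diagonal v = diagonal (fun p : B × C => v p.2) := by
  ext ⟨b, c⟩ ⟨b', c'⟩
  simp only [kroneckerMap_apply, one_apply, diagonal_apply, Prod.mk.injEq]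
  split_ifs with h1 h2 h3 <;> simp_all

lemma mexp_one_kron_diagonal (v : C → ℂ) :
    mexp ((1 : Matrix B B ℂ) ⊗ₖ diagonal v) = 1 ⊗ₖ diagonal fun i => Complex.exp (v i) := by
  rw [one_kron_diagonal, one_kron_diagonal, mexp, Matrix.exp_diagonal]
  congr 1
  funext p
  rw [Pi.exp_def, Complex.exp_eq_exp_ℂ]

lemma trace_mexp_hermitian {ι : Type*} [Fintype ι] [DecidableEq ι] {M : Matrix ι ι ℂ}
    (hM : M.IsHermitian) :
    Matrix.trace (mexp M) = ((∑ i, Real.exp (hM.eigenvalues i) : ℝ) : ℂ) := by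
  set Uu : Matrix ι ι ℂ := (hM.eigenvectorUnitary : Matrix ι ι ℂ) with hUu
  have h2 : Uu * star Uu = 1 := (Matrix.mem_unitaryGroup_iff).mp hM.eigenvectorUnitary.2
  have h1 : star Uu * Uu = 1 := (Matrix.mem_unitaryGroup_iff').mp hM.eigenvectorUnitary.2
  have hunit : IsUnit Uu := ⟨⟨Uu, star Uu, h2, h1⟩, rfl⟩
  have hinv : Uu⁻¹ = star Uu := Matrix.inv_eq_right_inv h2
  have hs : M = Uu * diagonal (RCLike.ofReal ∘ hM.eigenvalues) * Uu⁻¹ := by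
    rw [hinv]; exact hM.spectral_theorem
  have he : exp M = Uu * exp (diagonal (RCLike.ofReal ∘ hM.eigenvalues)) * Uu⁻¹ := by
    conv_lhs => rw [hs]
    exact Matrix.exp_conj _ _ hunit
  rw [mexp, he, Matrix.trace_mul_cycle, hinv, h1,
    one_mul, Matrix.exp_diagonal, trace_diagonal]
  rw [Complex.ofReal_sum]
  refine Finset.sum_congr rfl fun i _ => ?_
  rw [Pi.exp_def]
  simp only [Function.comp_apply, ← Complex.exp_eq_exp_ℂ]
  exact (Complex.ofReal_exp _).symm

lemma trace_mexp_ne_zero {ι : Type*} [Fintype ι] [DecidableEq ι] [Nonempty ι]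
    {M : Matrix ι ι ℂ} (hM : M.IsHermitian) : Matrix.trace (mexp M) ≠ 0 := by
  rw [trace_mexp_hermitian hM]
  have : 0 < ∑ i, Real.exp (hM.eigenvalues i) :=
    Finset.sum_pos (fun i _ => Real.exp_pos _) Finset.univ_nonempty
  exact_mod_cast this.ne'

lemma neg_smul_hermitian {ι : Type*} [Fintype ι] [DecidableEq ι] {M : Matrix ι ι ℂ}
    (hM : M.IsHermitian) (b : ℝ) : ((-b : ℝ) • M).IsHermitian := by
  have : (-b : ℝ) • M = ((-b : ℝ) : ℂ) • M := by ext i j; simp [Complex.real_smul]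
  rw [Matrix.IsHermitian, this, conjTranspose_smul, hM.eq, Complex.star_def,
    Complex.conj_ofReal]

lemma trace_gibbs {ι : Type*} [Fintype ι] [DecidableEq ι] [Nonempty ι] {M : Matrix ι ι ℂ}
    (hM : M.IsHermitian) (b : ℝ) : Matrix.trace (gibbs M b) = 1 := by
  rw [gibbs, trace_smul, smul_eq_mul]
  exact inv_mul_cancel₀ (trace_mexp_ne_zero (neg_smul_hermitian hM b))

/-- Part (a): Gibbs state of the Kronecker-sum Hamiltonian. -/
lemma gibbs_kron {n : ℕ} (H_B : Matrix B B ℂ) {b : ℝ} (hb : 0 < b)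
    (l : Fin n → ℝ) (hl : ∀ i, 0 < l i) (hlsum : ∑ i, l i = 1) :
    gibbs (H_B ⊗ₖ (1 : Matrix (Fin n) (Fin n) ℂ) +
        (1 : Matrix B B ℂ) ⊗ₖ Matrix.diagonal (fun i => ((-b⁻¹ * Real.log (l i) : ℝ) : ℂ))) b =
      gibbs H_B b ⊗ₖ Matrix.diagonal (fun i => (l i : ℂ)) := by
  set d1 : Fin n → ℂ := fun i => ((-b⁻¹ * Real.log (l i) : ℝ) : ℂ) with hd1
  set w : Fin n → ℂ := fun i => ((Real.log (l i) : ℝ) : ℂ) with hw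
  have hbne : b ≠ 0 := hb.ne'
  have hsm : (-b : ℝ) • (H_B ⊗ₖ (1 : Matrix (Fin n) (Fin n) ℂ) + 1 ⊗ₖ diagonal d1) =
      (((-b : ℝ)) • H_B) ⊗ₖ (1 : Matrix (Fin n) (Fin n) ℂ) + 1 ⊗ₖ diagonal w := by
    rw [smul_add, ← smul_kronecker, ← kronecker_smul, ← diagonal_smul]
    have hdw : (-b : ℝ) • d1 = w := by
      funext i
      rw [Pi.smul_apply, hd1, Complex.real_smul, hw]
      have hbc : (b : ℂ) ≠ 0 := by exact_mod_cast hbne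
      push_cast
      field_simp
    rw [hdw]
  have hcomm : Commute ((((-b : ℝ)) • H_B) ⊗ₖ (1 : Matrix (Fin n) (Fin n) ℂ))
      ((1 : Matrix B B ℂ) ⊗ₖ diagonal w) := by
    unfold Commute SemiconjBy
    rw [← mul_kronecker_mul, ← mul_kronecker_mul, mul_one, one_mul, mul_one, one_mul]
  have hexpw : (fun i => Complex.exp (w i)) = fun i => ((l i : ℝ) : ℂ) := by
    funext i
    rw [hw, ← Complex.ofReal_exp, Real.exp_log (hl i)]
  have hmexp : mexp ((-b : ℝ) • (H_B ⊗ₖ (1 : Matrix (Fin n) (Fin n) ℂ) + 1 ⊗ₖ diagonal d1)) =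
      mexp ((-b : ℝ) • H_B) ⊗ₖ diagonal fun i => (l i : ℂ) := by
    rw [hsm, mexp, Matrix.exp_add_of_commute _ _ hcomm]
    have h1 : exp ((((-b : ℝ)) • H_B) ⊗ₖ (1 : Matrix (Fin n) (Fin n) ℂ)) =
        mexp ((-b : ℝ) • H_B) ⊗ₖ 1 := mexp_kron_one _
    have h2 : exp ((1 : Matrix B B ℂ) ⊗ₖ diagonal w) =
        1 ⊗ₖ diagonal fun i => (l i : ℂ) := by
      rw [show exp ((1 : Matrix B B ℂ) ⊗ₖ diagonal w) = mexp (1 ⊗ₖ diagonal w) from rfl,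
        mexp_one_kron_diagonal, hexpw]
    rw [h1, h2, ← mul_kronecker_mul, mul_one, one_mul]
  have htr : Matrix.trace (diagonal fun i => ((l i : ℝ) : ℂ)) = 1 := by
    rw [trace_diagonal]
    exact_mod_cast congrArg (Complex.ofReal) hlsum
  rw [gibbs, gibbs, hmexp, trace_kronecker, htr, mul_one, ← smul_kronecker]

lemma sandwich_one {X : Type*} [Fintype X] [DecidableEq X] {n : ℕ}
    (P R : Fin n → Matrix X X ℂ) :
    (∑ i, P i ⊗ₖ single i i (1 : ℂ)) * (∑ j, R j ⊗ₖ single j j (1 : ℂ)) =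
      ∑ i, (P i * R i) ⊗ₖ single i i 1 := by
  have h := sandwich P R (1 : Matrix X X ℂ) (fun _ => (1 : ℂ))
  rw [diagonal_one, one_kronecker_one, mul_one] at h
  rw [h]
  exact Finset.sum_congr rfl fun i _ => by rw [one_smul, mul_one]

lemma zkron_mul_kron_stdBasis {X : Type*} [Fintype X] [DecidableEq X] {n : ℕ}
    (Z K : Matrix X X ℂ) (d : Fin n → ℂ) (i : Fin n) :
    (Z ⊗ₖ diagonal d) * (K ⊗ₖ single i i (1 : ℂ)) =
      d i • ((Z * K) ⊗ₖ single i i 1) := by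
  rw [← mul_kronecker_mul, diagonal_mul_stdBasis, kronecker_smul]

end Helpers

/-- Convexity of the set of (operation, HTO) pairs via a controller system. -/
theorem convexity_via_controller
    {A B : Type*} [Fintype A] [DecidableEq A] [Nonempty A]
    [Fintype B] [DecidableEq B] [Nonempty B]
    (H_B : Matrix B B ℂ) (hH : H_B.IsHermitian) {b : ℝ} (hb : 0 < b)
    (n : ℕ) (hn : 1 ≤ n)
    (U : Fin n → Matrix (A × B) (A × B) ℂ) (hU : ∀ i, (U i)ᴴ * U i = 1)
    (l : Fin n → ℝ) (hl : ∀ i, 0 < l i) (hlsum : ∑ i, l i = 1)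
    (H_C : Matrix (Fin n) (Fin n) ℂ)
    (hHC : H_C = Matrix.diagonal (fun i => ((-b⁻¹ * Real.log (l i) : ℝ) : ℂ)))
    (H_BC : Matrix (B × Fin n) (B × Fin n) ℂ)
    (hHBC : H_BC = H_B ⊗ₖ (1 : Matrix (Fin n) (Fin n) ℂ) + (1 : Matrix B B ℂ) ⊗ₖ H_C)
    (V : Matrix (A × B × Fin n) (A × B × Fin n) ℂ)
    (hV : V = Matrix.reindex (Equiv.prodAssoc A B (Fin n)) (Equiv.prodAssoc A B (Fin n))
      (∑ i, U i ⊗ₖ Matrix.single i i (1 : ℂ))) :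
    gibbs H_BC b = gibbs H_B b ⊗ₖ Matrix.diagonal (fun i => (l i : ℂ)) ∧
    Vᴴ * V = 1 ∧
    (∀ ρ : Matrix A A ℂ, IsDensityMatrix ρ →
      ptraceB (V * (ρ ⊗ₖ (gibbs H_B b ⊗ₖ Matrix.diagonal (fun i => (l i : ℂ)))) * Vᴴ) =
        ∑ i, (l i : ℂ) • ptraceB (U i * (ρ ⊗ₖ gibbs H_B b) * (U i)ᴴ)) ∧
    hto H_BC b V = ∑ i, (l i : ℂ) • hto H_B b (U i) := by
  classical
  set ea := Equiv.prodAssoc A B (Fin n) with hea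
  set ρB := gibbs H_B b with hρB
  set D : Matrix (Fin n) (Fin n) ℂ := Matrix.diagonal (fun i => (l i : ℂ)) with hD
  set W : Matrix ((A × B) × Fin n) ((A × B) × Fin n) ℂ :=
    ∑ i, U i ⊗ₖ Matrix.single i i (1 : ℂ) with hW
  have parta : gibbs H_BC b = ρB ⊗ₖ D := by
    rw [hHBC, hHC, hρB, hD]; exact gibbs_kron H_B hb l hl hlsum
  have hWH : Wᴴ = ∑ i, (U i)ᴴ ⊗ₖ Matrix.single i i (1 : ℂ) := by
    rw [hW, conjTranspose_sum]
    exact Finset.sum_congr rfl fun i _ => by rw [conjTranspose_kron, stdBasis_conjTranspose]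
  have hVW : V = reindex ea ea W := hV
  have hVH : Vᴴ = reindex ea ea Wᴴ := by rw [hVW, reindex_conjT]
  -- part (b)
  have hWW : Wᴴ * W = 1 := by
    rw [hWH, hW, sandwich_one]
    have : ∀ i : Fin n, ((U i)ᴴ * U i) ⊗ₖ Matrix.single i i (1 : ℂ) =
        (1 : Matrix (A × B) (A × B) ℂ) ⊗ₖ Matrix.single i i (1 : ℂ) := fun i => by
      rw [hU i]
    rw [Finset.sum_congr rfl fun i _ => this i, ← kron_sum, sum_stdBasis, one_kronecker_one]
  have partb : Vᴴ * V = 1 := by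
    rw [hVH, hVW, reindex_mul, hWW, reindex_one]
  -- part (c)
  have partc : ∀ ρ : Matrix A A ℂ, IsDensityMatrix ρ →
      ptraceB (V * (ρ ⊗ₖ (gibbs H_B b ⊗ₖ Matrix.diagonal fun i => (l i : ℂ))) * Vᴴ) =
        ∑ i, (l i : ℂ) • ptraceB (U i * (ρ ⊗ₖ gibbs H_B b) * (U i)ᴴ) := by
    intro ρ _
    have hmid : ρ ⊗ₖ (ρB ⊗ₖ D) = reindex ea ea ((ρ ⊗ₖ ρB) ⊗ₖ D) := (kronecker_assoc ρ ρB D).symm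
    rw [← hρB, ← hD, hmid, hVH, hVW, reindex_mul, reindex_mul, ptraceB_reindex_assoc]
    rw [hW, hWH, sandwich U (fun j => (U j)ᴴ) (ρ ⊗ₖ ρB) (fun i => (l i : ℂ))]
    rw [ptraceB_sum, ptraceB_sum]
    refine Finset.sum_congr rfl fun i _ => ?_
    rw [ptraceB_smul, ptraceB_kron, trace_stdBasis, one_smul, ptraceB_smul]
  refine ⟨parta, partb, partc, ?_⟩
  -- part (d)
  have hρBtr : Matrix.trace ρB = 1 := trace_gibbs hH b
  have hsumc : ∑ i, (l i : ℂ) = 1 := by exact_mod_cast congrArg Complex.ofReal hlsum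
  set hc : Fin n → ℂ := fun i => ((-b⁻¹ * Real.log (l i) : ℝ) : ℂ) with hhc
  have hHCd : H_C = diagonal hc := hHC
  set Sr : ℝ := ∑ i, l i * (-b⁻¹ * Real.log (l i)) with hSr
  have hS : (∑ i, (l i : ℂ) * hc i) = (Sr : ℂ) := by
    rw [hSr, Complex.ofReal_sum]
    exact Finset.sum_congr rfl fun i _ => by rw [hhc, Complex.ofReal_mul]
  have hEc : Matrix.trace (gibbs H_BC b * H_BC) =
      Matrix.trace (ρB * H_B) + (Sr : ℂ) := by
    rw [parta, hHBC, mul_add, trace_add]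
    congr 1
    · rw [← mul_kronecker_mul, mul_one, trace_kronecker, hD, trace_diagonal, hsumc, mul_one]
    · rw [← mul_kronecker_mul, mul_one, trace_kronecker, hρBtr, one_mul, hHCd, hD,
        diagonal_mul_diagonal, trace_diagonal, ← hS]
  have hEBC : eqEnergy H_BC b = eqEnergy H_B b + Sr := by
    rw [eqEnergy, eqEnergy, hEc, Complex.add_re, Complex.ofReal_re, ← hρB]
  have e1 : (1 : Matrix A A ℂ) ⊗ₖ gibbs H_BC b =
      reindex ea ea (((1 : Matrix A A ℂ) ⊗ₖ ρB) ⊗ₖ D) := by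
    rw [parta]; exact (kronecker_assoc _ _ _).symm
  have e2 : (1 : Matrix A A ℂ) ⊗ₖ H_BC =
      reindex ea ea ((((1 : Matrix A A ℂ) ⊗ₖ H_B) ⊗ₖ (1 : Matrix (Fin n) (Fin n) ℂ)) +
        ((1 : Matrix (A × B) (A × B) ℂ) ⊗ₖ H_C)) := by
    rw [hHBC, kronecker_add, reindex_add, kronecker_assoc, ← one_kronecker_one (α := ℂ)
      (m := A) (n := B), kronecker_assoc]
  have hinner : (1 : Matrix A A ℂ) ⊗ₖ gibbs H_BC b * Vᴴ * ((1 : Matrix A A ℂ) ⊗ₖ H_BC) * V =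
      reindex ea ea ((((1 : Matrix A A ℂ) ⊗ₖ ρB) ⊗ₖ D) * Wᴴ *
        ((((1 : Matrix A A ℂ) ⊗ₖ H_B) ⊗ₖ (1 : Matrix (Fin n) (Fin n) ℂ)) +
          ((1 : Matrix (A × B) (A × B) ℂ) ⊗ₖ H_C)) * W) := by
    rw [e1, e2, hVH, hVW, reindex_mul, reindex_mul, reindex_mul]
  set G1 : Matrix (A × B) (A × B) ℂ := (1 : Matrix A A ℂ) ⊗ₖ H_B with hG1
  have hX : Wᴴ * ((G1 ⊗ₖ (1 : Matrix (Fin n) (Fin n) ℂ)) +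
        ((1 : Matrix (A × B) (A × B) ℂ) ⊗ₖ H_C)) * W =
      (∑ i, ((U i)ᴴ * G1 * U i) ⊗ₖ Matrix.single i i (1 : ℂ)) +
        ∑ i, hc i • ((1 : Matrix (A × B) (A × B) ℂ) ⊗ₖ Matrix.single i i (1 : ℂ)) := by
    rw [mul_add, add_mul, hWH, hW]
    congr 1
    · have hs1 := sandwich (fun i => (U i)ᴴ) U G1 (fun _ => (1 : ℂ))
      rw [diagonal_one] at hs1
      rw [hs1]
      exact Finset.sum_congr rfl fun i _ => by rw [one_smul]
    · rw [hHCd]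
      have hs2 := sandwich (fun i => (U i)ᴴ) U (1 : Matrix (A × B) (A × B) ℂ) hc
      rw [hs2]
      exact Finset.sum_congr rfl fun i _ => by rw [mul_one, hU i]
  -- multiply by the left factor
  set Z : Matrix (A × B) (A × B) ℂ := (1 : Matrix A A ℂ) ⊗ₖ ρB with hZ
  have hLX : (Z ⊗ₖ D) * Wᴴ *
        ((G1 ⊗ₖ (1 : Matrix (Fin n) (Fin n) ℂ)) +
          ((1 : Matrix (A × B) (A × B) ℂ) ⊗ₖ H_C)) * W =
      (∑ i, (l i : ℂ) • ((Z * ((U i)ᴴ * G1 * U i)) ⊗ₖ Matrix.single i i (1 : ℂ))) +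
        ∑ i, (hc i * (l i : ℂ)) • (Z ⊗ₖ Matrix.single i i (1 : ℂ)) := by
    rw [mul_assoc, mul_assoc, ← mul_assoc Wᴴ, hX, mul_add, Finset.mul_sum, Finset.mul_sum]
    congr 1
    · exact Finset.sum_congr rfl fun i _ => by rw [hD, zkron_mul_kron_stdBasis]
    · refine Finset.sum_congr rfl fun i _ => ?_
      rw [mul_smul_comm, hD, zkron_mul_kron_stdBasis, mul_one, smul_smul]
  -- partial trace of the main term
  have hIdPt : ptraceB Z = 1 := by rw [hZ, ptraceB_kron, hρBtr, one_smul]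
  have hPT : ptraceB ((1 : Matrix A A ℂ) ⊗ₖ gibbs H_BC b * Vᴴ * ((1 : Matrix A A ℂ) ⊗ₖ H_BC) * V) =
      (∑ i, (l i : ℂ) • ptraceB (Z * ((U i)ᴴ * G1 * U i))) + (Sr : ℂ) • 1 := by
    rw [hinner, ptraceB_reindex_assoc, hLX, ptraceB_add, ptraceB_sum, ptraceB_sum,
      ptraceB_add, ptraceB_sum, ptraceB_sum]
    congr 1
    · refine Finset.sum_congr rfl fun i _ => ?_
      rw [ptraceB_smul, ptraceB_kron, trace_stdBasis, one_smul, ptraceB_smul]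
    · have : ∀ i : Fin n, ptraceB (ptraceB ((hc i * (l i : ℂ)) •
          (Z ⊗ₖ Matrix.single i i (1 : ℂ)))) = (hc i * (l i : ℂ)) • (1 : Matrix A A ℂ) := by
        intro i
        rw [ptraceB_smul, ptraceB_kron, trace_stdBasis, one_smul, ptraceB_smul, hIdPt]
      rw [Finset.sum_congr rfl fun i _ => this i, ← Finset.sum_smul, ← hS]
      congr 1
      exact Finset.sum_congr rfl fun i _ => mul_comm _ _
  -- final assembly
  rw [hto, hPT, hEBC]
  have hRHS : ∀ i : Fin n, (l i : ℂ) • hto H_B b (U i) =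
      (l i : ℂ) • ptraceB (Z * ((U i)ᴴ * G1 * U i)) - ((l i : ℂ) * (eqEnergy H_B b : ℂ)) • 1 := by
    intro i
    rw [hto, smul_sub, real_smul_matrix, smul_smul, ← hρB, ← hZ, ← hG1,
      mul_assoc, mul_assoc, ← mul_assoc (U i)ᴴ]
  rw [Finset.sum_congr rfl fun i _ => hRHS i, Finset.sum_sub_distrib, ← Finset.sum_smul,
    ← Finset.sum_mul, hsumc, one_mul, real_smul_matrix, Complex.ofReal_add, add_smul]
  abel
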